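/- For every t ≥ 3, the reduced degree distribution has the closed form P̄(0,t) = (1/(t-1)) · ∏_{i=2}^{t-1} (1 - A/((m+A)·i))^m · [1 + Σ_{l=2}^{t-1} ∏_{j=2}^{l} (1 - A/((m+A)·j))^{-m}]. -/

import Mathlib

open Finset Filter Topology

/-- closed form for the reduced degree distribution at degree 0. -/
theorem dms_reduced_closed_form_deg_zero
    (m : ℕ) (hm : 1 ≤ m) (A : ℝ) (hA : 0 < A)
    (P : ℕ → ℕ → ℕ → ℝ)
    (hP11 : ∀ q : ℕ, P q 1 1 = if q = m then 1 else 0)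
    (hPii : ∀ q i : ℕ, 2 ≤ i → P q i i = if q = 0 then 1 else 0)
    (hPrec : ∀ q i t : ℕ, 1 ≤ i → i ≤ t →
      P q i (t + 1) = ∑ j ∈ Finset.Icc 0 (min m q),
        (m.choose j : ℝ) * (((q : ℝ) - (j : ℝ) + A) / ((m + A) * t)) ^ j *
          (1 - ((q : ℝ) - (j : ℝ) + A) / ((m + A) * t)) ^ (m - j) * P (q - j) i t)
    (Pbar : ℕ → ℕ → ℝ)
    (hPbar : ∀ q t : ℕ, 2 ≤ t →
      Pbar q t = (1 / ((t : ℝ) - 1)) * ∑ i ∈ Finset.Icc 2 t, P q i t) :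
    ∀ t : ℕ, 3 ≤ t →
      Pbar 0 t =
        (1 / ((t : ℝ) - 1)) *
          (∏ i ∈ Finset.Icc 2 (t - 1), (1 - A / ((m + A) * (i : ℝ))) ^ m) *
          (1 + ∑ l ∈ Finset.Icc 2 (t - 1),
            ∏ j ∈ Finset.Icc 2 l, (1 - A / ((m + A) * (j : ℝ))) ^ (-(m : ℤ))) := by
  set c : ℕ → ℝ := fun s => 1 - A / ((m + A) * (s : ℝ)) with hc
  have hmA : (0 : ℝ) < (m : ℝ) + A := by positivity
  have hc_pos : ∀ s : ℕ, 1 ≤ s → 0 < c s := by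
    intro s hs
    have hs1 : (1 : ℝ) ≤ (s : ℝ) := by exact_mod_cast hs
    have hden : (0 : ℝ) < (m + A) * s := by
      have : (0:ℝ) < (s:ℝ) := by linarith
      positivity
    have : A / ((m + A) * s) < 1 := by
      rw [div_lt_one hden]
      have hm1 : (1 : ℝ) ≤ (m : ℝ) := by exact_mod_cast hm
      nlinarith
    simpa [hc] using by linarith
  have hg_ne : ∀ s : ℕ, 1 ≤ s → (c s) ^ m ≠ 0 := fun s hs =>
    pow_ne_zero _ (ne_of_gt (hc_pos s hs))
  -- key closed form for P 0 i t
  have key : ∀ n i : ℕ, 2 ≤ i → P 0 i (i + n) = ∏ s ∈ Finset.Ico i (i + n), (c s) ^ m := by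
    intro n
    induction n with
    | zero => intro i hi; simp [hPii 0 i hi]
    | succ n ih =>
      intro i hi
      have h1 : 1 ≤ i := by omega
      have h2 : i ≤ i + n := by omega
      have := hPrec 0 i (i + n) h1 h2
      have hmin : min m 0 = 0 := Nat.min_zero m
      rw [hmin] at this
      rw [show i + (n + 1) = (i + n) + 1 by omega, this]
      rw [Finset.Icc_self, Finset.sum_singleton]
      simp only [Nat.choose_zero_right, Nat.cast_one, Nat.cast_zero, pow_zero,
        Nat.sub_zero, Nat.cast_ofNat, one_mul, sub_zero, zero_sub, neg_add_cancel]
      rw [ih i hi, Finset.prod_Ico_succ_top h2]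
      simp only [hc, zero_add]
      ring
  intro t ht
  have ht2 : 2 ≤ t := by omega
  rw [hPbar 0 t ht2]
  have hPt : ∀ i ∈ Finset.Icc 2 t, P 0 i t = ∏ s ∈ Finset.Ico i t, (c s) ^ m := by
    intro i hi
    rw [Finset.mem_Icc] at hi
    have := key (t - i) i hi.1
    rw [show i + (t - i) = t by omega] at this
    exact this
  rw [Finset.sum_congr rfl hPt]
  -- rewrite zpow
  have hzpow : ∀ j : ℕ, 1 ≤ j → (c j) ^ (-(m : ℤ)) = ((c j) ^ m)⁻¹ := by
    intro j hj
    rw [zpow_neg, zpow_natCast]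
  -- now pure sum identity
  have hIccIco : Finset.Icc 2 (t - 1) = Finset.Ico 2 t := by
    rw [← Finset.Ico_add_one_right_eq_Icc]; congr 1; omega
  rw [mul_assoc]
  congr 1
  rw [mul_add, mul_one, Finset.mul_sum]
  -- split LHS sum: Icc 2 t = {2} ∪ Icc 3 t
  have hsplit : Finset.Icc 2 t = insert 2 (Finset.Icc 3 t) := by
    ext x; simp only [Finset.mem_Icc, Finset.mem_insert]; omega
  rw [hsplit, Finset.sum_insert (by simp)]
  have hIco2t : Finset.Ico 2 t = Finset.Icc 2 (t-1) := hIccIco.symm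
  congr 1
  -- reindex: ∑_{i ∈ Icc 3 t} f i = ∑_{l ∈ Icc 2 (t-1)} f (l+1)
  have himg : Finset.Icc 3 t = (Finset.Icc 2 (t-1)).image (· + 1) := by
    rw [Finset.image_add_right_Icc, show t - 1 + 1 = t by omega]
  rw [himg, Finset.sum_image (by intro a _ b _ h; simp only at h; omega)]
  apply Finset.sum_congr rfl
  intro l hl
  rw [Finset.mem_Icc] at hl
  -- show ∏_{Ico (l+1) t} g = ∏_{Ico 2 t} g * ∏_{Icc 2 l} g⁻¹
  have h2l : 2 ≤ l + 1 := by omega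
  have hlt : l + 1 ≤ t := by omega
  have hprod : (∏ s ∈ Finset.Ico 2 (l+1), (c s) ^ m) * ∏ s ∈ Finset.Ico (l+1) t, (c s) ^ m
      = ∏ s ∈ Finset.Ico 2 t, (c s) ^ m := Finset.prod_Ico_consecutive _ h2l hlt
  have hIccl : Finset.Icc 2 l = Finset.Ico 2 (l+1) := by
    rw [Finset.Ico_add_one_right_eq_Icc]
  rw [Finset.prod_congr rfl (fun j hj => hzpow j (by rw [Finset.mem_Icc] at hj; omega))]
  rw [hIccIco, ← hprod, hIccl, Finset.prod_inv_distrib]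
  have hne : (∏ s ∈ Finset.Ico 2 (l+1), (c s) ^ m) ≠ 0 :=
    Finset.prod_ne_zero_iff.mpr fun s hs =>
      hg_ne s (by rw [Finset.mem_Ico] at hs; omega)
  rw [mul_comm (∏ s ∈ Finset.Ico 2 (l+1), (c s) ^ m), mul_assoc,
    mul_inv_cancel₀ hne, mul_one]
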